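/- Let h be a random variable with exponential distribution of rate 1, and let I be a nonnegative random variable independent of h (both on the same probability space). Let P > 0, r > 0, σ² > 0 be real constants and α a real number. Then E[log₂(1 + P r^{−α} h / (σ² + I))] = ∫₀^∞ e^{−s σ²} · E[e^{−s I}] / ((s + P^{−1} r^{α}) · ln 2) ds. -/

import Mathlib

open MeasureTheory ProbabilityTheory

section Aux
open Real Set Filter Topology
open scoped ENNReal NNReal

lemma xexp_int : IntegrableOn (fun x : ℝ => x * Real.exp (-x)) (Set.Ioi 0) := by
  have h := Real.GammaIntegral_convergent (s := 2) (by norm_num)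
  refine (h.congr_fun ?_ measurableSet_Ioi)
  intro x hx
  rw [Set.mem_Ioi] at hx
  simp only
  rw [show (2:ℝ) - 1 = 1 by norm_num, Real.rpow_one, mul_comm]

lemma log_term_int {d : ℝ} (hd : 0 < d) :
    IntegrableOn (fun x : ℝ => Real.log (1 + x / d) * Real.exp (-x)) (Set.Ioi 0) := by
  refine Integrable.mono' (xexp_int.const_mul d⁻¹) ?_ ?_
  · exact ((Real.measurable_log.comp ((measurable_id.div_const d).const_add 1))).aestronglyMeasurable.mul
      (measurable_id.neg.exp).aestronglyMeasurable
  · filter_upwards [ae_restrict_mem measurableSet_Ioi] with x hx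
    rw [Set.mem_Ioi] at hx
    have hxd : 0 ≤ x / d := by positivity
    have h1 : 0 < 1 + x / d := by linarith
    have hlog0 : 0 ≤ Real.log (1 + x / d) := Real.log_nonneg (by linarith)
    have hlog : Real.log (1 + x / d) ≤ x / d := by
      have := Real.log_le_sub_one_of_pos h1; linarith
    rw [Real.norm_eq_abs, abs_of_nonneg (by positivity)]
    calc Real.log (1 + x/d) * Real.exp (-x) ≤ (x/d) * Real.exp (-x) :=
          mul_le_mul_of_nonneg_right hlog (Real.exp_nonneg _)
      _ = d⁻¹ * (x * Real.exp (-x)) := by ring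

lemma inv_term_int {d : ℝ} (hd : 0 < d) :
    IntegrableOn (fun x : ℝ => Real.exp (-x) / (x + d)) (Set.Ioi 0) := by
  have hexp : IntegrableOn (fun x : ℝ => Real.exp (-(1:ℝ) * x)) (Set.Ioi 0) :=
    exp_neg_integrableOn_Ioi 0 one_pos
  refine Integrable.mono' (hexp.const_mul d⁻¹) ?_ ?_
  · exact ((measurable_id.neg.exp).div ((measurable_id.add_const d))).aestronglyMeasurable
  · filter_upwards [ae_restrict_mem measurableSet_Ioi] with x hx
    rw [Set.mem_Ioi] at hx
    rw [Real.norm_eq_abs, abs_of_nonneg (by positivity)]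
    have h1 : Real.exp (-(1:ℝ) * x) = Real.exp (-x) := by norm_num
    rw [h1, div_le_iff₀ (by positivity)]
    have h2 : 1 ≤ d⁻¹ * (x + d) := by
      rw [inv_mul_eq_div, le_div_iff₀ hd]; linarith
    nlinarith [Real.exp_pos (-x)]

lemma aux_ibp {d : ℝ} (hd : 0 < d)
    (hint1 : IntegrableOn (fun x : ℝ => Real.log (1 + x / d) * Real.exp (-x)) (Set.Ioi 0))
    (hint2 : IntegrableOn (fun x : ℝ => Real.exp (-x) / (x + d)) (Set.Ioi 0)) :
    ∫ x in Set.Ioi (0:ℝ), Real.log (1 + x / d) * Real.exp (-x)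
      = ∫ x in Set.Ioi (0:ℝ), Real.exp (-x) / (x + d) := by
  set F : ℝ → ℝ := fun x => -Real.exp (-x) * Real.log (1 + x / d) with hF
  have hderiv : ∀ x ∈ Set.Ici (0:ℝ), HasDerivAt F
      (Real.log (1 + x / d) * Real.exp (-x) - Real.exp (-x) / (x + d)) x := by
    intro x hx
    rw [Set.mem_Ici] at hx
    have h1 : 0 < 1 + x / d := by positivity
    have hexp : HasDerivAt (fun x : ℝ => -Real.exp (-x)) (Real.exp (-x)) x := by
      exact (((Real.hasDerivAt_exp (-x)).comp x ((hasDerivAt_id x).neg)).neg).congr_deriv (by simp)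
    have hinner : HasDerivAt (fun x : ℝ => 1 + x / d) d⁻¹ x := by
      simpa using ((hasDerivAt_id x).div_const d).const_add 1
    have hlog : HasDerivAt (fun x : ℝ => Real.log (1 + x / d)) (d⁻¹ / (1 + x / d)) x :=
      hinner.log h1.ne'
    have := hexp.mul hlog
    refine this.congr_deriv ?_
    have h2 : d⁻¹ / (1 + x / d) = 1 / (x + d) := by
      rw [div_eq_div_iff h1.ne' (by positivity : (x:ℝ)+d ≠ 0)]
      field_simp
      ring
    rw [h2]
    field_simp
    ring
  have htend : Tendsto F atTop (𝓝 0) := by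
    have hsq : Tendsto (fun x : ℝ => d⁻¹ * (x * Real.exp (-x))) atTop (𝓝 0) := by
      have := (Real.tendsto_pow_mul_exp_neg_atTop_nhds_zero 1)
      simp only [pow_one] at this
      simpa using this.const_mul d⁻¹
    have hsq1 : ∀ᶠ x : ℝ in atTop, 0 ≤ Real.exp (-x) * Real.log (1 + x / d) := by
      filter_upwards [eventually_ge_atTop (0:ℝ)] with x hx
      have h0 : 0 ≤ x / d := by positivity
      exact mul_nonneg (Real.exp_nonneg _) (Real.log_nonneg (by linarith))
    have hsq2 : ∀ᶠ x : ℝ in atTop,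
        Real.exp (-x) * Real.log (1 + x / d) ≤ d⁻¹ * (x * Real.exp (-x)) := by
      filter_upwards [eventually_ge_atTop (0:ℝ)] with x hx
      have h1 : 0 < 1 + x / d := by positivity
      have hlog : Real.log (1 + x / d) ≤ x / d := by
        have := Real.log_le_sub_one_of_pos h1; linarith
      calc Real.exp (-x) * Real.log (1 + x / d) ≤ Real.exp (-x) * (x / d) :=
            mul_le_mul_of_nonneg_left hlog (Real.exp_nonneg _)
        _ = d⁻¹ * (x * Real.exp (-x)) := by ring
    have hg : Tendsto (fun x : ℝ => Real.exp (-x) * Real.log (1 + x / d)) atTop (𝓝 0) :=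
      squeeze_zero' hsq1 hsq2 hsq
    have := hg.neg
    simp only [neg_zero] at this
    simpa [hF, neg_mul] using this
  have key := integral_Ioi_of_hasDerivAt_of_tendsto'
    (f := F) (f' := fun x => Real.log (1 + x / d) * Real.exp (-x) - Real.exp (-x) / (x + d))
    (a := 0) hderiv (hint1.sub hint2) htend
  have hF0 : F 0 = 0 := by simp [hF]
  rw [hF0, sub_zero] at key
  have := integral_sub hint1 hint2
  rw [this] at key
  linarith

lemma aux_subst {b c : ℝ} (hb : 0 < b) (hc : 0 < c) :
    ∫ s in Set.Ioi (0:ℝ), Real.exp (-(s * b)) / (s + c⁻¹)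
      = ∫ t in Set.Ioi (0:ℝ), Real.exp (-t) / (t + b / c) := by
  have key := integral_comp_mul_left_Ioi (fun t => Real.exp (-t) / (t / b + c⁻¹)) 0 hb
  simp only [mul_zero] at key
  have h1 : ∀ s ∈ Set.Ioi (0:ℝ),
      Real.exp (-(s * b)) / (s + c⁻¹) = (fun t => Real.exp (-t) / (t / b + c⁻¹)) (b * s) := by
    intro s _
    simp only
    rw [mul_comm b s, mul_div_assoc, div_self hb.ne', mul_one, mul_comm s b]
  rw [setIntegral_congr_fun measurableSet_Ioi h1, key, smul_eq_mul, ← integral_const_mul]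
  refine setIntegral_congr_fun measurableSet_Ioi ?_
  intro t ht
  rw [Set.mem_Ioi] at ht
  have hden : 0 < t / b + c⁻¹ := by positivity
  have hden2 : 0 < t + b / c := by positivity
  rw [eq_div_iff hden2.ne']
  field_simp

lemma gammaPDF_one_one_toReal (x : ℝ) :
    (ProbabilityTheory.gammaPDF 1 1 x).toReal
      = if 0 ≤ x then Real.exp (-x) else 0 := by
  rw [ProbabilityTheory.gammaPDF_eq]
  split_ifs with hx
  · rw [ENNReal.toReal_ofReal (by positivity)]
    simp [Real.Gamma_one]
  · simp

lemma integral_expMeasure_one (f : ℝ → ℝ) :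
    ∫ x, f x ∂(ProbabilityTheory.expMeasure 1)
      = ∫ x in Set.Ioi (0:ℝ), f x * Real.exp (-x) := by
  have hexp : ProbabilityTheory.expMeasure 1
      = volume.withDensity (ProbabilityTheory.gammaPDF 1 1) := rfl
  have hpdf : ∀ x, ProbabilityTheory.gammaPDF 1 1 x
      = ((ProbabilityTheory.gammaPDFReal 1 1 x).toNNReal : ℝ≥0∞) := fun x => rfl
  rw [hexp]
  rw [show (ProbabilityTheory.gammaPDF 1 1)
      = (fun x => ((ProbabilityTheory.gammaPDFReal 1 1 x).toNNReal : ℝ≥0∞)) from funext hpdf]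
  rw [integral_withDensity_eq_integral_smul
    (by measurability : Measurable fun x => (ProbabilityTheory.gammaPDFReal 1 1 x).toNNReal) f]
  have hae : ∀ᵐ x : ℝ, x ≠ 0 := by
    rw [ae_iff]
    have : {x : ℝ | ¬ x ≠ 0} = {0} := by ext x; simp
    rw [this]
    exact measure_singleton 0
  rw [← integral_indicator measurableSet_Ioi]
  refine integral_congr_ae ?_
  filter_upwards [hae] with x hx
  rcases lt_trichotomy x 0 with hlt | heq | hgt
  · have : ProbabilityTheory.gammaPDFReal 1 1 x = 0 := by
      rw [ProbabilityTheory.gammaPDFReal, if_neg (not_le.mpr hlt)]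
    simp [Set.indicator_of_notMem (by simp [Set.mem_Ioi]; linarith : x ∉ Set.Ioi (0:ℝ)), this]
  · exact absurd heq hx
  · have : ProbabilityTheory.gammaPDFReal 1 1 x = Real.exp (-x) := by
      rw [ProbabilityTheory.gammaPDFReal, if_pos hgt.le]
      simp [Real.Gamma_one]
    rw [Set.indicator_of_mem (Set.mem_Ioi.mpr hgt)]
    simp only [NNReal.smul_def, smul_eq_mul, this]
    rw [Real.coe_toNNReal _ (Real.exp_nonneg _)]
    ring

lemma cxb_eq {b c : ℝ} (hb : 0 < b) (hc : 0 < c) (x : ℝ) :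
    1 + c * x / b = 1 + x / (b / c) := by
  rw [div_div_eq_mul_div, mul_comm]

lemma aux_key {b c : ℝ} (hb : 0 < b) (hc : 0 < c) :
    ∫ x, Real.log (1 + c * x / b) ∂(ProbabilityTheory.expMeasure 1)
      = ∫ s in Set.Ioi (0:ℝ), Real.exp (-(s * b)) / (s + c⁻¹) := by
  have hd : 0 < b / c := by positivity
  rw [integral_expMeasure_one, aux_subst hb hc]
  simp_rw [cxb_eq hb hc]
  exact aux_ibp hd (log_term_int hd) (inv_term_int hd)

-- key logb version
lemma aux_key_logb {b c : ℝ} (hb : 0 < b) (hc : 0 < c) :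
    ∫ x, Real.logb 2 (1 + c * x / b) ∂(ProbabilityTheory.expMeasure 1)
      = ∫ s in Set.Ioi (0:ℝ), Real.exp (-(s * b)) / ((s + c⁻¹) * Real.log 2) := by
  simp_rw [Real.logb, div_eq_mul_inv (Real.log _), integral_mul_const]
  rw [aux_key hb hc, ← integral_mul_const]
  refine setIntegral_congr_fun measurableSet_Ioi fun s _ => ?_
  rw [← div_eq_mul_inv, div_div]

-- integrability of the logb integrand wrt expMeasure
lemma logb_integrable {b c : ℝ} (hb : 0 < b) (hc : 0 < c) :
    Integrable (fun x => Real.logb 2 (1 + c * x / b)) (ProbabilityTheory.expMeasure 1) := by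
  have hd : 0 < b / c := by positivity
  have hmeas : Measurable fun x : ℝ => Real.log (1 + c * x / b) :=
    Real.measurable_log.comp (((measurable_id.const_mul c).div_const b).const_add 1)
  have : Integrable (fun x => Real.log (1 + c * x / b)) (ProbabilityTheory.expMeasure 1) := by
    rw [show ProbabilityTheory.expMeasure 1 = volume.withDensity (ProbabilityTheory.gammaPDF 1 1)
      from rfl]
    rw [show ProbabilityTheory.gammaPDF 1 1
      = fun x => ENNReal.ofReal (ProbabilityTheory.gammaPDFReal 1 1 x) from rfl]
    rw [integrable_withDensity_iff_integrable_smul'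
      ((ProbabilityTheory.measurable_gammaPDFReal 1 1).ennreal_ofReal)
      (μ := volume)
      (ae_of_all _ fun x => ENNReal.ofReal_lt_top)]
    have heq : (fun x => (ProbabilityTheory.gammaPDF 1 1 x).toReal • Real.log (1 + c * x / b))
        =ᵐ[volume] (Set.Ioi (0:ℝ)).indicator
          (fun x => Real.log (1 + x / (b/c)) * Real.exp (-x)) := by
      have hae : ∀ᵐ x : ℝ, x ≠ 0 := by
        rw [ae_iff]
        have : {x : ℝ | ¬ x ≠ 0} = {0} := by ext x; simp
        rw [this]; exact measure_singleton 0
      filter_upwards [hae] with x hx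
      rw [ProbabilityTheory.gammaPDF_eq]
      rcases lt_trichotomy x 0 with hlt | heq | hgt
      · rw [if_neg (not_le.mpr hlt)]
        simp [Set.indicator_of_notMem (by simp [Set.mem_Ioi]; linarith : x ∉ Set.Ioi (0:ℝ))]
      · exact absurd heq hx
      · rw [if_pos hgt.le, Set.indicator_of_mem (Set.mem_Ioi.mpr hgt)]
        rw [ENNReal.toReal_ofReal (by simp [Real.Gamma_one]; positivity)]
        simp only [smul_eq_mul, Real.Gamma_one, cxb_eq hb hc]
        rw [show (1:ℝ) - 1 = 0 by norm_num, Real.rpow_zero]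
        ring_nf
    refine Integrable.congr ?_ heq.symm
    rw [integrable_indicator_iff measurableSet_Ioi]
    exact log_term_int hd
  simpa [Real.logb, div_eq_mul_inv] using this.mul_const (Real.log 2)⁻¹

lemma expMeasure_ae_pos : ∀ᵐ x ∂(ProbabilityTheory.expMeasure 1), 0 < x := by
  rw [ae_iff]
  have hset : {x : ℝ | ¬ 0 < x} = Set.Iic 0 := by ext x; simp
  rw [hset]
  rw [show ProbabilityTheory.expMeasure 1 = volume.withDensity (ProbabilityTheory.gammaPDF 1 1)
    from rfl]
  rw [withDensity_apply _ measurableSet_Iic]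
  rw [Measure.restrict_congr_set Iio_ae_eq_Iic.symm]
  exact ProbabilityTheory.lintegral_gammaPDF_of_nonpos le_rfl

lemma exp_div_int {b e : ℝ} (hb : 0 < b) (he : 0 < e) :
    IntegrableOn (fun s : ℝ => Real.exp (-(s * b)) / ((s + e) * Real.log 2)) (Set.Ioi 0) := by
  have hlog2 : (0:ℝ) < Real.log 2 := Real.log_pos one_lt_two
  have hexp : IntegrableOn (fun s : ℝ => Real.exp (-b * s)) (Set.Ioi 0) :=
    exp_neg_integrableOn_Ioi 0 hb
  refine Integrable.mono' (hexp.const_mul ((e * Real.log 2)⁻¹)) ?_ ?_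
  · exact Measurable.aestronglyMeasurable
      ((measurable_id.mul_const b).neg.exp.div ((measurable_id.add_const e).mul_const _))
  · filter_upwards [ae_restrict_mem measurableSet_Ioi] with s hs
    rw [Set.mem_Ioi] at hs
    have hD : 0 < (s + e) * Real.log 2 := mul_pos (by positivity) hlog2
    rw [Real.norm_eq_abs, abs_of_nonneg (by positivity), div_le_iff₀ hD]
    have h1 : Real.exp (-b * s) = Real.exp (-(s * b)) := by ring_nf
    rw [h1]
    have h2 : 1 ≤ (e * Real.log 2)⁻¹ * ((s + e) * Real.log 2) := by
      rw [inv_mul_eq_div, le_div_iff₀ (by positivity)]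
      nlinarith
    nlinarith [Real.exp_pos (-(s * b))]

end Aux

open Real Set Filter Topology in
open scoped ENNReal NNReal in
/-- Core throughput identity: for Rayleigh fading `h ∼ exp(1)`, independent nonnegative
interference `I`, power `P > 0`, distance `r > 0`, noise `σ² > 0` and path-loss exponent `α`,
`E[log₂(1 + P r^{−α} h/(σ² + I))]
  = ∫₀^∞ e^{−sσ²} E[e^{−sI}] / ((s + P⁻¹ r^α) ln 2) ds`. -/
theorem expected_rate_eq_laplace_integral {Ω : Type*} [MeasurableSpace Ω] (μ : Measure Ω)
    [IsProbabilityMeasure μ] (h I : Ω → ℝ) (hlaw : μ.map h = expMeasure 1)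
    (hI0 : ∀ ω, 0 ≤ I ω) (hindep : IndepFun h I μ)
    (P r σ2 : ℝ) (hP : 0 < P) (hr : 0 < r) (hσ2 : 0 < σ2) (α : ℝ) :
    ∫ ω, Real.logb 2 (1 + P * r ^ (-α) * h ω / (σ2 + I ω)) ∂μ
      = ∫ s in Set.Ioi (0 : ℝ),
          Real.exp (-(s * σ2)) * (∫ ω, Real.exp (-(s * I ω)) ∂μ)
            / ((s + P⁻¹ * r ^ α) * Real.log 2) := by
  have hc : 0 < P * r ^ (-α) := mul_pos hP (Real.rpow_pos_of_pos hr _)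
  set c : ℝ := P * r ^ (-α) with hcdef
  have hcinv : P⁻¹ * r ^ α = c⁻¹ := by
    rw [hcdef, mul_inv, Real.rpow_neg hr.le, inv_inv]
  rw [hcinv]
  have hmeash : AEMeasurable h μ := by
    by_contra hcon
    rw [Measure.map_of_not_aemeasurable hcon] at hlaw
    haveI := isProbabilityMeasure_expMeasure one_pos
    have h1 : (expMeasure 1) Set.univ = 1 := measure_univ
    rw [← hlaw] at h1
    simp at h1
  have hh_pos : ∀ᵐ ω ∂μ, 0 < h ω := by
    have h1 : ∀ᵐ x ∂(μ.map h), 0 < x := by rw [hlaw]; exact expMeasure_ae_pos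
    exact (ae_map_iff hmeash measurableSet_Ioi).mp h1
  have hlog2 : (0:ℝ) < Real.log 2 := Real.log_pos one_lt_two
  by_cases hmeasI : AEMeasurable I μ
  · haveI hPexp : IsProbabilityMeasure (expMeasure 1) := isProbabilityMeasure_expMeasure one_pos
    set ν : Measure ℝ := μ.map I with hνdef
    haveI : IsProbabilityMeasure ν := Measure.isProbabilityMeasure_map hmeasI
    have hIy : ∀ᵐ y ∂ν, 0 ≤ y := by
      rw [hνdef, ae_map_iff hmeasI measurableSet_Ici]
      exact ae_of_all _ hI0
    have hpair : μ.map (fun ω => (h ω, I ω)) = (expMeasure 1).prod ν := by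
      rw [hνdef, ← hlaw]
      exact (indepFun_iff_map_prod_eq_prod_map_map hmeash hmeasI).mp hindep
    have hmeasF : Measurable (fun p : ℝ × ℝ => Real.logb 2 (1 + c * p.1 / (σ2 + p.2))) := by
      have hm : Measurable (fun p : ℝ × ℝ => 1 + c * p.1 / (σ2 + p.2)) :=
        ((measurable_fst.const_mul c).div (measurable_snd.const_add σ2)).const_add 1
      exact (Real.measurable_log.comp hm).div_const _
    -- LHS to lintegral
    have h_nonneg : 0 ≤ᵐ[μ] fun ω => Real.logb 2 (1 + c * h ω / (σ2 + I ω)) := by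
      filter_upwards [hh_pos] with ω hω
      have hden : 0 < σ2 + I ω := by have := hI0 ω; linarith
      have hfrac : 0 ≤ c * h ω / (σ2 + I ω) := by positivity
      exact Real.logb_nonneg one_lt_two (by linarith)
    have h_aesm : AEStronglyMeasurable (fun ω => Real.logb 2 (1 + c * h ω / (σ2 + I ω))) μ :=
      (hmeasF.comp_aemeasurable (hmeash.prodMk hmeasI)).aestronglyMeasurable
    have hL1 := integral_eq_lintegral_of_nonneg_ae h_nonneg h_aesm
    have hL2 : ∫⁻ ω, ENNReal.ofReal (Real.logb 2 (1 + c * h ω / (σ2 + I ω))) ∂μ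
        = ∫⁻ y, ∫⁻ x, ENNReal.ofReal (Real.logb 2 (1 + c * x / (σ2 + y)))
            ∂(expMeasure 1) ∂ν := by
      calc ∫⁻ ω, ENNReal.ofReal (Real.logb 2 (1 + c * h ω / (σ2 + I ω))) ∂μ
          = ∫⁻ p, ENNReal.ofReal (Real.logb 2 (1 + c * p.1 / (σ2 + p.2)))
              ∂(μ.map (fun ω => (h ω, I ω))) :=
            (lintegral_map' hmeasF.ennreal_ofReal.aemeasurable
              (hmeash.prodMk hmeasI)).symm
        _ = ∫⁻ p, ENNReal.ofReal (Real.logb 2 (1 + c * p.1 / (σ2 + p.2)))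
              ∂((expMeasure 1).prod ν) := by rw [hpair]
        _ = ∫⁻ y, ∫⁻ x, ENNReal.ofReal (Real.logb 2 (1 + c * x / (σ2 + y)))
              ∂(expMeasure 1) ∂ν :=
            lintegral_prod_symm _ hmeasF.ennreal_ofReal.aemeasurable
    have hinner : ∀ᵐ y ∂ν, ∫⁻ x, ENNReal.ofReal (Real.logb 2 (1 + c * x / (σ2 + y)))
          ∂(expMeasure 1)
        = ENNReal.ofReal (∫ s in Set.Ioi (0:ℝ),
            Real.exp (-(s * (σ2 + y))) / ((s + c⁻¹) * Real.log 2)) := by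
      filter_upwards [hIy] with y hy
      have hb : 0 < σ2 + y := by linarith
      rw [← ofReal_integral_eq_lintegral_ofReal (logb_integrable hb hc) ?_,
        aux_key_logb hb hc]
      filter_upwards [expMeasure_ae_pos] with x hx
      have hfrac : 0 ≤ c * x / (σ2 + y) := by positivity
      exact Real.logb_nonneg one_lt_two (by linarith)
    -- RHS
    have hT : ∀ s : ℝ, ∫ ω, Real.exp (-(s * I ω)) ∂μ = ∫ y, Real.exp (-(s * y)) ∂ν := by
      intro s
      have hm : Measurable fun y : ℝ => Real.exp (-(s * y)) :=
        (measurable_const.mul measurable_id).neg.exp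
      exact (integral_map hmeasI hm.aestronglyMeasurable).symm
    have hTmeas : StronglyMeasurable (fun s : ℝ => ∫ y, Real.exp (-(s * y)) ∂ν) := by
      apply StronglyMeasurable.integral_prod_right
        (f := fun s y => Real.exp (-(s * y)))
      exact Continuous.stronglyMeasurable
        (by continuity : Continuous fun p : ℝ × ℝ => Real.exp (-(p.1 * p.2)))
    have hRrw : ∫ s in Set.Ioi (0:ℝ), Real.exp (-(s * σ2)) * (∫ ω, Real.exp (-(s * I ω)) ∂μ)
          / ((s + c⁻¹) * Real.log 2)
        = ∫ s in Set.Ioi (0:ℝ), Real.exp (-(s * σ2)) * (∫ y, Real.exp (-(s * y)) ∂ν)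
          / ((s + c⁻¹) * Real.log 2) := by
      refine setIntegral_congr_fun measurableSet_Ioi fun s _ => ?_
      rw [hT s]
    have hRnonneg : 0 ≤ᵐ[volume.restrict (Set.Ioi (0:ℝ))]
        fun s => Real.exp (-(s * σ2)) * (∫ y, Real.exp (-(s * y)) ∂ν)
          / ((s + c⁻¹) * Real.log 2) := by
      filter_upwards [ae_restrict_mem measurableSet_Ioi] with s hs
      rw [Set.mem_Ioi] at hs
      have h1 : 0 ≤ ∫ y, Real.exp (-(s * y)) ∂ν := integral_nonneg fun y => Real.exp_nonneg _
      have h2 : 0 < (s + c⁻¹) * Real.log 2 := mul_pos (by positivity) hlog2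
      exact div_nonneg (mul_nonneg (Real.exp_nonneg _) h1) h2.le
    have hRaesm : AEStronglyMeasurable
        (fun s => Real.exp (-(s * σ2)) * (∫ y, Real.exp (-(s * y)) ∂ν)
          / ((s + c⁻¹) * Real.log 2)) (volume.restrict (Set.Ioi (0:ℝ))) :=
      Measurable.aestronglyMeasurable
        ((((measurable_id.mul_const σ2).neg.exp.mul hTmeas.measurable).div
          ((measurable_id.add_const c⁻¹).mul_const (Real.log 2))))
    have hR1 := integral_eq_lintegral_of_nonneg_ae hRnonneg hRaesm
    have hR2 : ∀ᵐ s ∂(volume.restrict (Set.Ioi (0:ℝ))),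
        ENNReal.ofReal (Real.exp (-(s * σ2)) * (∫ y, Real.exp (-(s * y)) ∂ν)
          / ((s + c⁻¹) * Real.log 2))
        = ∫⁻ y, ENNReal.ofReal (Real.exp (-(s * (σ2 + y))) / ((s + c⁻¹) * Real.log 2)) ∂ν := by
      filter_upwards [ae_restrict_mem measurableSet_Ioi] with s hs
      rw [Set.mem_Ioi] at hs
      have hD : 0 < (s + c⁻¹) * Real.log 2 := mul_pos (by positivity) hlog2
      have ha : 0 ≤ Real.exp (-(s * σ2)) / ((s + c⁻¹) * Real.log 2) := by positivity
      have hrw : Real.exp (-(s * σ2)) * (∫ y, Real.exp (-(s * y)) ∂ν)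
            / ((s + c⁻¹) * Real.log 2)
          = (Real.exp (-(s * σ2)) / ((s + c⁻¹) * Real.log 2))
            * ∫ y, Real.exp (-(s * y)) ∂ν := by ring
      have hint : Integrable (fun y => Real.exp (-(s * y))) ν := by
        refine Integrable.mono' (integrable_const (1:ℝ))
          (Measurable.aestronglyMeasurable ((measurable_id.const_mul s).neg.exp)) ?_
        filter_upwards [hIy] with y hy
        rw [Real.norm_eq_abs, abs_of_nonneg (Real.exp_nonneg _)]
        calc Real.exp (-(s * y)) ≤ Real.exp 0 :=
              Real.exp_le_exp.mpr (by nlinarith)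
          _ = 1 := Real.exp_zero
      rw [hrw, ENNReal.ofReal_mul ha,
        ofReal_integral_eq_lintegral_ofReal hint (ae_of_all _ fun y => Real.exp_nonneg _),
        ← lintegral_const_mul' _ _ ENNReal.ofReal_ne_top]
      refine lintegral_congr fun y => ?_
      rw [← ENNReal.ofReal_mul ha]
      congr 1
      rw [div_mul_eq_mul_div, ← Real.exp_add]
      have : -(s * σ2) + -(s * y) = -(s * (σ2 + y)) := by ring
      rw [this]
    have hKmeas : Measurable (Function.uncurry fun (s y : ℝ) =>
        ENNReal.ofReal (Real.exp (-(s * (σ2 + y))) / ((s + c⁻¹) * Real.log 2))) := by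
      refine Measurable.ennreal_ofReal ?_
      exact ((measurable_fst.mul (measurable_snd.const_add σ2)).neg.exp.div
        ((measurable_fst.add_const c⁻¹).mul_const (Real.log 2)))
    have hR3 : ∫⁻ s in Set.Ioi (0:ℝ), ∫⁻ y,
          ENNReal.ofReal (Real.exp (-(s * (σ2 + y))) / ((s + c⁻¹) * Real.log 2)) ∂ν
        = ∫⁻ y, (∫⁻ s in Set.Ioi (0:ℝ),
          ENNReal.ofReal (Real.exp (-(s * (σ2 + y))) / ((s + c⁻¹) * Real.log 2))) ∂ν :=
      lintegral_lintegral_swap hKmeas.aemeasurable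
    have hR4 : ∀ᵐ y ∂ν, (∫⁻ s in Set.Ioi (0:ℝ),
          ENNReal.ofReal (Real.exp (-(s * (σ2 + y))) / ((s + c⁻¹) * Real.log 2)))
        = ENNReal.ofReal (∫ s in Set.Ioi (0:ℝ),
            Real.exp (-(s * (σ2 + y))) / ((s + c⁻¹) * Real.log 2)) := by
      filter_upwards [hIy] with y hy
      have hb : 0 < σ2 + y := by linarith
      rw [← ofReal_integral_eq_lintegral_ofReal (exp_div_int hb (inv_pos.mpr hc)) ?_]
      filter_upwards [ae_restrict_mem measurableSet_Ioi] with s hs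
      rw [Set.mem_Ioi] at hs
      have hD : 0 < (s + c⁻¹) * Real.log 2 := mul_pos (by positivity) hlog2
      positivity
    rw [hL1, hL2, lintegral_congr_ae hinner, hRrw, hR1, lintegral_congr_ae hR2, hR3,
      lintegral_congr_ae hR4]
  · -- degenerate case: both sides are zero
    have hLHS : ¬ AEStronglyMeasurable
        (fun ω => Real.logb 2 (1 + c * h ω / (σ2 + I ω))) μ := by
      intro hsm
      apply hmeasI
      have hg := hsm.aemeasurable
      set g : Ω → ℝ := fun ω => Real.logb 2 (1 + c * h ω / (σ2 + I ω)) with hgdef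
      have h1 : AEMeasurable (fun ω => Real.exp (Real.log 2 * g ω) - 1) μ :=
        (Real.measurable_exp.comp_aemeasurable (hg.const_mul (Real.log 2))).sub
          aemeasurable_const
      have h2 : AEMeasurable
          (fun ω => c * h ω / (Real.exp (Real.log 2 * g ω) - 1) - σ2) μ :=
        ((hmeash.const_mul c).div h1).sub aemeasurable_const
      refine h2.congr ?_
      filter_upwards [hh_pos] with ω hω
      have hden : 0 < σ2 + I ω := by have := hI0 ω; linarith
      have hfrac : 0 < c * h ω / (σ2 + I ω) := by positivity
      have hz : 0 < 1 + c * h ω / (σ2 + I ω) := by linarith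
      have hexp : Real.exp (Real.log 2 * g ω) = 1 + c * h ω / (σ2 + I ω) := by
        rw [hgdef]
        rw [← Real.rpow_def_of_pos two_pos]
        exact Real.rpow_logb two_pos (by norm_num) hz
      rw [hexp]
      have hch : c * h ω ≠ 0 := by positivity
      field_simp
      ring
    have hRHS : ∀ s ∈ Set.Ioi (0:ℝ),
        Real.exp (-(s * σ2)) * (∫ ω, Real.exp (-(s * I ω)) ∂μ)
          / ((s + c⁻¹) * Real.log 2) = 0 := by
      intro s hs
      rw [Set.mem_Ioi] at hs
      have hnm : ¬ AEStronglyMeasurable (fun ω => Real.exp (-(s * I ω))) μ := by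
        intro hsm
        apply hmeasI
        have hg := hsm.aemeasurable
        have h2 : AEMeasurable (fun ω => -(s⁻¹ * Real.log (Real.exp (-(s * I ω))))) μ :=
          ((Real.measurable_log.comp_aemeasurable hg).const_mul s⁻¹).neg
        refine h2.congr (ae_of_all _ fun ω => ?_)
        simp only [Real.log_exp]
        field_simp
      rw [integral_non_aestronglyMeasurable hnm]
      simp
    rw [integral_non_aestronglyMeasurable hLHS,
      setIntegral_congr_fun measurableSet_Ioi hRHS, integral_zero]
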